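/- Let H be a real separable Hilbert space with orthonormal system (e_k)_{k∈ℕ}, let (Ω, 𝓕, P) be a probability space, let 0 ≤ t ≤ T, let ε_L ≥ 0, and let (η_k)_{k∈ℕ} be nonnegative reals with ∑_k η_k < ∞. Let (X_k)_{k∈ℕ} be real-valued square-integrable random variables with E(X_k²) = t for all k, and let Y_1, …, Y_N be real-valued square-integrable random variables with E((X_k − Y_k)²) ≤ ε_L for k = 1, …, N. Then the series L = ∑_{k∈ℕ} √η_k · X_k · e_k converges in L²(Ω; H), and with L̃_N = ∑_{k=1}^N √η_k · Y_k · e_k it holds that E(‖L − L̃_N‖²_H) ≤ t·∑_{k>N} η_k + ε_L·∑_{k=1}^N η_k ≤ T·∑_{k>N} η_k + ε_L·∑_{k=1}^N η_k. -/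

import Mathlib

open MeasureTheory Filter
open scoped RealInnerProductSpace

lemma onb_norm_sum {H : Type*} [NormedAddCommGroup H] [InnerProductSpace ℝ H]
    {ι : Type*} {e : ι → H} (he : Orthonormal ℝ e) (c : ι → ℝ) (s : Finset ι) :
    ‖∑ k ∈ s, c k • e k‖ ^ 2 = ∑ k ∈ s, c k ^ 2 := by
  simpa [LinearIsometry.toSpanSingleton_apply, Real.norm_eq_abs, sq_abs]
    using he.orthogonalFamily.norm_sum c s

lemma onb_summable {H : Type*} [NormedAddCommGroup H] [InnerProductSpace ℝ H] [CompleteSpace H]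
    {ι : Type*} {e : ι → H} (he : Orthonormal ℝ e) {a : ι → ℝ}
    (ha : Summable fun k => a k ^ 2) : Summable fun k => a k • e k := by
  have h := (he.orthogonalFamily.summable_iff_norm_sq_summable a).2
    (by simpa [Real.norm_eq_abs, sq_abs] using ha)
  simpa [LinearIsometry.toSpanSingleton_apply] using h

lemma onb_norm_tsum_sq {H : Type*} [NormedAddCommGroup H] [InnerProductSpace ℝ H] [CompleteSpace H]
    {ι : Type*} {e : ι → H} (he : Orthonormal ℝ e) {a : ι → ℝ}
    (ha : Summable fun k => a k ^ 2) :
    ‖∑' k, a k • e k‖ ^ 2 = ∑' k, a k ^ 2 := by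
  have hs := (onb_summable he ha).hasSum
  have hc : Continuous fun x : H => ‖x‖ ^ 2 := (continuous_norm).pow 2
  have h2 : HasSum (fun k => a k ^ 2) (‖∑' k, a k • e k‖ ^ 2) := by
    have ht := (hc.tendsto _).comp hs
    refine ht.congr fun s => ?_
    exact onb_norm_sum he a s
  exact h2.tsum_eq.symm

/-- Overall noise approximation error: with an orthonormal system `(e_k)` in `H`,
nonnegative summable `(η_k)`, marginals `X_k` with `E(X_k²) = t`, and
approximations `Y_k` with `E((X_k − Y_k)²) ≤ ε_L` for `k < N`, the series
`L = ∑_k √η_k X_k e_k` converges in `L²(Ω; H)` and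
`E‖L − ∑_{k<N} √η_k Y_k e_k‖² ≤ t·∑_{k≥N} η_k + ε_L·∑_{k<N} η_k
  ≤ T·∑_{k≥N} η_k + ε_L·∑_{k<N} η_k`. -/
theorem noise_approximation_error
    {H : Type*} [NormedAddCommGroup H] [InnerProductSpace ℝ H] [CompleteSpace H]
    {Ω : Type*} [MeasurableSpace Ω] (μ : Measure Ω) [IsProbabilityMeasure μ]
    (e : ℕ → H) (he : Orthonormal ℝ e)
    (t T εL : ℝ) (ht : 0 ≤ t) (htT : t ≤ T) (hεL : 0 ≤ εL)
    (η : ℕ → ℝ) (hη : ∀ k, 0 ≤ η k) (hsum : Summable η)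
    (N : ℕ)
    (X : ℕ → Ω → ℝ) (hX : ∀ k, MemLp (X k) 2 μ)
    (hXvar : ∀ k, ∫ ω, (X k ω) ^ 2 ∂μ = t)
    (Y : ℕ → Ω → ℝ) (hY : ∀ k < N, MemLp (Y k) 2 μ)
    (hXY : ∀ k < N, ∫ ω, (X k ω - Y k ω) ^ 2 ∂μ ≤ εL) :
    ∃ L : Ω → H, MemLp L 2 μ
      ∧ Tendsto
          (fun n => ∫ ω,
            ‖L ω - ∑ k ∈ Finset.range n, (Real.sqrt (η k) * X k ω) • e k‖ ^ 2 ∂μ)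
          atTop (nhds 0)
      ∧ (∫ ω, ‖L ω - ∑ k ∈ Finset.range N, (Real.sqrt (η k) * Y k ω) • e k‖ ^ 2 ∂μ
          ≤ t * (∑' k, η (k + N)) + εL * ∑ k ∈ Finset.range N, η k)
      ∧ t * (∑' k, η (k + N)) + εL * ∑ k ∈ Finset.range N, η k
          ≤ T * (∑' k, η (k + N)) + εL * ∑ k ∈ Finset.range N, η k := by
  classical
  have hsq : ∀ (k : ℕ) (ω : Ω), (Real.sqrt (η k) * X k ω) ^ 2 = η k * X k ω ^ 2 :=
    fun k ω => by rw [mul_pow, Real.sq_sqrt (hη k)]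
  have h_int : ∀ k, Integrable (fun ω => η k * X k ω ^ 2) μ :=
    fun k => ((hX k).integrable_sq).const_mul _
  have hmeas : ∀ k : ℕ, AEMeasurable (fun ω => ENNReal.ofReal (η k * X k ω ^ 2)) μ :=
    fun k => ENNReal.measurable_ofReal.comp_aemeasurable (h_int k).aemeasurable
  have hval : ∀ k : ℕ, ∫⁻ ω, ENNReal.ofReal (η k * X k ω ^ 2) ∂μ = ENNReal.ofReal (η k * t) := by
    intro k
    rw [← ofReal_integral_eq_lintegral_ofReal (h_int k)
      (Filter.Eventually.of_forall fun ω => mul_nonneg (hη k) (sq_nonneg _)),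
      integral_const_mul, hXvar k]
  -- a.e. summability
  have hGood : ∀ᵐ ω ∂μ, Summable (fun k => η k * X k ω ^ 2) := by
    have hlt : ∫⁻ ω, ∑' k, ENNReal.ofReal (η k * X k ω ^ 2) ∂μ ≠ ⊤ := by
      rw [lintegral_tsum hmeas]
      simp_rw [hval]
      rw [← ENNReal.ofReal_tsum_of_nonneg (fun k => mul_nonneg (hη k) ht) (hsum.mul_right t)]
      exact ENNReal.ofReal_ne_top
    have hae := ae_lt_top' (AEMeasurable.ennreal_tsum hmeas) hlt
    filter_upwards [hae] with ω hω
    have hs := ENNReal.summable_toReal hω.ne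
    refine hs.congr fun k => ?_
    rw [ENNReal.toReal_ofReal (mul_nonneg (hη k) (sq_nonneg _))]
  -- the limit
  set L : Ω → H := fun ω => ∑' k, (Real.sqrt (η k) * X k ω) • e k with hLdef
  -- integrability and value of the shifted tail sums
  have key : ∀ n : ℕ, Integrable (fun ω => ∑' k, η (k + n) * X (k + n) ω ^ 2) μ ∧
      ∫ ω, ∑' k, η (k + n) * X (k + n) ω ^ 2 ∂μ = t * ∑' k, η (k + n) := by
    intro n
    have h_int' : ∀ k : ℕ, Integrable (fun ω => η (k + n) * X (k + n) ω ^ 2) μ :=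
      fun k => h_int (k + n)
    have h_sum : Summable (fun k : ℕ => ∫ ω, ‖η (k + n) * X (k + n) ω ^ 2‖ ∂μ) := by
      refine ((summable_nat_add_iff (f := fun k => η k * t) n).2 (hsum.mul_right t)).congr fun k => ?_
      rw [show (fun ω => ‖η (k + n) * X (k + n) ω ^ 2‖) = fun ω => η (k + n) * X (k + n) ω ^ 2 from
        funext fun ω => Real.norm_of_nonneg (mul_nonneg (hη _) (sq_nonneg _))]
      rw [integral_const_mul, hXvar]
    have heq := integral_tsum_of_summable_integral_norm h_int' h_sum
    have hWmeas : AEStronglyMeasurable (fun ω => ∑' k, η (k + n) * X (k + n) ω ^ 2) μ := by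
      refine aestronglyMeasurable_of_tendsto_ae atTop
        (f := fun m ω => ∑ k ∈ Finset.range m, η (k + n) * X (k + n) ω ^ 2)
        (fun m => (Finset.range m).aestronglyMeasurable_fun_sum fun k _ => (h_int' k).aestronglyMeasurable) ?_
      filter_upwards [hGood] with ω hg
      exact ((summable_nat_add_iff (f := fun k => η k * X k ω ^ 2) n).2 hg).hasSum.tendsto_sum_nat
    have hWfin : HasFiniteIntegral (fun ω => ∑' k, η (k + n) * X (k + n) ω ^ 2) μ := by
      rw [hasFiniteIntegral_iff_ofReal (Filter.Eventually.of_forall fun ω =>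
        tsum_nonneg fun k => mul_nonneg (hη _) (sq_nonneg _))]
      have hbound : ∀ ω, ENNReal.ofReal (∑' k, η (k + n) * X (k + n) ω ^ 2)
          ≤ ∑' k, ENNReal.ofReal (η (k + n) * X (k + n) ω ^ 2) := by
        intro ω
        by_cases hsummable : Summable (fun k => η (k + n) * X (k + n) ω ^ 2)
        · rw [ENNReal.ofReal_tsum_of_nonneg (fun k => mul_nonneg (hη _) (sq_nonneg _)) hsummable]
        · rw [tsum_eq_zero_of_not_summable hsummable]; simp
      refine lt_of_le_of_lt (lintegral_mono hbound) ?_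
      rw [lintegral_tsum fun k => hmeas (k + n)]
      simp_rw [hval]
      rw [← ENNReal.ofReal_tsum_of_nonneg (fun k => mul_nonneg (hη _) ht)
        ((summable_nat_add_iff (f := fun k => η k * t) n).2 (hsum.mul_right t))]
      exact ENNReal.ofReal_lt_top
    refine ⟨⟨hWmeas, hWfin⟩, ?_⟩
    rw [← heq]
    simp_rw [integral_const_mul, hXvar]
    rw [tsum_mul_right, mul_comm]
  -- pointwise norm identity for tails
  have hWnorm : ∀ n : ℕ, ∀ᵐ ω ∂μ,
      ‖L ω - ∑ k ∈ Finset.range n, (Real.sqrt (η k) * X k ω) • e k‖ ^ 2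
        = ∑' k, η (k + n) * X (k + n) ω ^ 2 := by
    intro n
    filter_upwards [hGood] with ω hg
    have hsq' : Summable (fun k => (Real.sqrt (η k) * X k ω) ^ 2) := by
      simp_rw [hsq]; exact hg
    have hf : Summable (fun k => (Real.sqrt (η k) * X k ω) • e k) := onb_summable he hsq'
    have hsplit := Summable.sum_add_tsum_nat_add (f := fun k => (Real.sqrt (η k) * X k ω) • e k) n hf
    have h1 : L ω - ∑ k ∈ Finset.range n, (Real.sqrt (η k) * X k ω) • e k
        = ∑' i, (Real.sqrt (η (i + n)) * X (i + n) ω) • e (i + n) := by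
      have hLω : L ω = ∑' k, (Real.sqrt (η k) * X k ω) • e k := rfl
      rw [hLω, ← hsplit]
      abel
    rw [h1]
    have he' : Orthonormal ℝ (fun i => e (i + n)) := he.comp _ (add_left_injective n)
    have ha' : Summable (fun i => (Real.sqrt (η (i + n)) * X (i + n) ω) ^ 2) := by
      simp_rw [hsq]; exact (summable_nat_add_iff (f := fun k => η k * X k ω ^ 2) n).2 hg
    exact (onb_norm_tsum_sq he' ha').trans (tsum_congr fun i => hsq _ _)
  -- measurability of L
  have hSmeas : ∀ n : ℕ, AEStronglyMeasurable
      (fun ω => ∑ k ∈ Finset.range n, (Real.sqrt (η k) * X k ω) • e k) μ := by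
    intro n
    exact (Finset.range n).aestronglyMeasurable_fun_sum fun k _ =>
      ((hX k).aestronglyMeasurable.const_mul _).smul_const (e k)
  have hLmeas : AEStronglyMeasurable L μ := by
    refine aestronglyMeasurable_of_tendsto_ae atTop hSmeas ?_
    filter_upwards [hGood] with ω hg
    have hsq' : Summable (fun k => (Real.sqrt (η k) * X k ω) ^ 2) := by
      simp_rw [hsq]; exact hg
    exact (onb_summable he hsq').hasSum.tendsto_sum_nat
  have hmem : MemLp L 2 μ := by
    rw [memLp_two_iff_integrable_sq_norm hLmeas]
    refine Integrable.congr (key 0).1 ?_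
    filter_upwards [hWnorm 0] with ω hω
    simpa using hω.symm
  refine ⟨L, hmem, ?_, ?_, ?_⟩
  · -- Tendsto
    have hval' : ∀ n : ℕ, ∫ ω,
        ‖L ω - ∑ k ∈ Finset.range n, (Real.sqrt (η k) * X k ω) • e k‖ ^ 2 ∂μ
          = t * ∑' k, η (k + n) := by
      intro n
      rw [integral_congr_ae (hWnorm n)]
      exact (key n).2
    simp_rw [hval']
    have := (tendsto_sum_nat_add η).const_mul t
    simpa using this
  · -- main bound
    have hVterm : ∀ k ∈ Finset.range N, Integrable (fun ω => η k * (X k ω - Y k ω) ^ 2) μ := by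
      intro k hk
      exact (((hX k).sub (hY k (Finset.mem_range.1 hk))).integrable_sq).const_mul _
    have hVint : Integrable (fun ω => ∑ k ∈ Finset.range N, η k * (X k ω - Y k ω) ^ 2) μ :=
      integrable_finset_sum _ hVterm
    have hmain_ae : ∀ᵐ ω ∂μ,
        ‖L ω - ∑ k ∈ Finset.range N, (Real.sqrt (η k) * Y k ω) • e k‖ ^ 2
          = (∑' k, η (k + N) * X (k + N) ω ^ 2)
            + ∑ k ∈ Finset.range N, η k * (X k ω - Y k ω) ^ 2 := by
      filter_upwards [hGood] with ω hg
      have hsq' : Summable (fun k => (Real.sqrt (η k) * X k ω) ^ 2) := by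
        simp_rw [hsq]; exact hg
      have hf : Summable (fun k => (Real.sqrt (η k) * X k ω) • e k) := onb_summable he hsq'
      have hsplit := Summable.sum_add_tsum_nat_add (f := fun k => (Real.sqrt (η k) * X k ω) • e k) N hf
      have he' : Orthonormal ℝ (fun i => e (i + N)) := he.comp _ (add_left_injective N)
      have ha' : Summable (fun i => (Real.sqrt (η (i + N)) * X (i + N) ω) ^ 2) := by
        simp_rw [hsq]; exact (summable_nat_add_iff (f := fun k => η k * X k ω ^ 2) N).2 hg
      have htail_summable : Summable (fun i => (Real.sqrt (η (i + N)) * X (i + N) ω) • e (i + N)) :=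
        onb_summable he' ha'
      set tail : H := ∑' i, (Real.sqrt (η (i + N)) * X (i + N) ω) • e (i + N) with htaildef
      set fin : H := ∑ k ∈ Finset.range N,
        (Real.sqrt (η k) * (X k ω - Y k ω)) • e k with hfindef
      have hdecomp : L ω - ∑ k ∈ Finset.range N, (Real.sqrt (η k) * Y k ω) • e k
          = tail + fin := by
        have hLω : L ω = ∑' k, (Real.sqrt (η k) * X k ω) • e k := rfl
        rw [hLω, ← hsplit]
        rw [hfindef]
        rw [show (∑ k ∈ Finset.range N, (Real.sqrt (η k) * (X k ω - Y k ω)) • e k)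
            = ∑ k ∈ Finset.range N, ((Real.sqrt (η k) * X k ω) • e k
                - (Real.sqrt (η k) * Y k ω) • e k) from
          Finset.sum_congr rfl fun k _ => by rw [← sub_smul, ← mul_sub]]
        rw [Finset.sum_sub_distrib]
        abel
      have hinner : ⟪fin, tail⟫ = 0 := by
        have hmap := htail_summable.hasSum.mapL (innerSL ℝ fin)
        have hzero : ∀ i : ℕ,
            (innerSL ℝ fin) ((Real.sqrt (η (i + N)) * X (i + N) ω) • e (i + N)) = 0 := by
          intro i
          rw [innerSL_apply_apply, inner_smul_right]
          have : ⟪fin, e (i + N)⟫ = 0 := by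
            rw [hfindef, sum_inner]
            refine Finset.sum_eq_zero fun k hk => ?_
            rw [inner_smul_left]
            rw [he.2 (by have := Finset.mem_range.1 hk; omega : k ≠ i + N)]
            simp
          rw [this, mul_zero]
        have h0 : HasSum (fun i : ℕ =>
            (innerSL ℝ fin) ((Real.sqrt (η (i + N)) * X (i + N) ω) • e (i + N))) 0 := by
          simpa [hzero] using (hasSum_zero : HasSum (fun _ : ℕ => (0 : ℝ)) 0)
        have := hmap.unique h0
        simpa [innerSL_apply_apply] using this
      rw [hdecomp, norm_add_sq_real, ← real_inner_comm tail fin, hinner]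
      have htailnorm : ‖tail‖ ^ 2 = ∑' k, η (k + N) * X (k + N) ω ^ 2 := by
        rw [htaildef]
        exact (onb_norm_tsum_sq he' ha').trans (tsum_congr fun i => hsq _ _)
      have hfinnorm : ‖fin‖ ^ 2 = ∑ k ∈ Finset.range N, η k * (X k ω - Y k ω) ^ 2 := by
        rw [hfindef, onb_norm_sum he]
        refine Finset.sum_congr rfl fun k _ => ?_
        rw [mul_pow, Real.sq_sqrt (hη k)]
      rw [htailnorm, hfinnorm]
      ring
    rw [integral_congr_ae hmain_ae, integral_add (key N).1 hVint, (key N).2,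
      integral_finset_sum _ hVterm]
    refine add_le_add_right ?_ _
    calc ∑ k ∈ Finset.range N, ∫ ω, η k * (X k ω - Y k ω) ^ 2 ∂μ
        = ∑ k ∈ Finset.range N, η k * ∫ ω, (X k ω - Y k ω) ^ 2 ∂μ := by
          exact Finset.sum_congr rfl fun k _ => integral_const_mul _ _
      _ ≤ ∑ k ∈ Finset.range N, η k * εL := by
          refine Finset.sum_le_sum fun k hk => ?_
          exact mul_le_mul_of_nonneg_left (hXY k (Finset.mem_range.1 hk)) (hη k)
      _ = εL * ∑ k ∈ Finset.range N, η k := by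
          rw [Finset.mul_sum]; exact Finset.sum_congr rfl fun k _ => mul_comm _ _
  · exact add_le_add_left
      (mul_le_mul_of_nonneg_right htT (tsum_nonneg fun k => hη _)) _
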